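/- Let G be an abelian group and D a digraph on σ-tuples over G with derived digraph D_×. Define the automorphism f of D_× by f(v, b) = (v, a + b) for a fixed a ∈ G. If f maps some vertex into its own strong component (i.e., there is a directed walk from (v,b) to (v,a+b) for some vertex (v,b)), then f maps every vertex into its own strong component. -/

import Mathlib

/-- The derived digraph arc relation on `V(D) × G`. -/
def derivedRel {G : Type*} [AddGroup G] {σ : ℕ}
    (E : (Fin (σ + 1) → G) → (Fin (σ + 1) → G) → Prop) :
    ((Fin (σ + 1) → G) × G) → ((Fin (σ + 1) → G) × G) → Prop :=
  fun p q => E p.1 q.1 ∧ p.2 + q.1 (Fin.last σ) = q.2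

lemma derived_shift {G : Type*} [AddCommGroup G] {σ : ℕ}
    (E : (Fin (σ + 1) → G) → (Fin (σ + 1) → G) → Prop) (d : G) {p q} :
    Relation.ReflTransGen (derivedRel E) p q →
    Relation.ReflTransGen (derivedRel E) (p.1, p.2 + d) (q.1, q.2 + d) := by
  intro h
  induction h with
  | refl => exact .refl
  | tail _ hst ih =>
    exact ih.tail ⟨hst.1, by rw [← hst.2]; dsimp only; abel⟩

lemma derived_lift {G : Type*} [AddCommGroup G] {σ : ℕ}
    (E : (Fin (σ + 1) → G) → (Fin (σ + 1) → G) → Prop) {u v} :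
    Relation.ReflTransGen E u v →
    ∃ d : G, ∀ c : G, Relation.ReflTransGen (derivedRel E) (u, c) (v, c + d) := by
  intro h
  induction h with
  | refl => exact ⟨0, fun c => by simpa using Relation.ReflTransGen.refl⟩
  | @tail s t _ hst ih =>
    obtain ⟨d, hd⟩ := ih
    refine ⟨d + t (Fin.last σ), fun c => (hd c).tail ⟨hst, add_assoc _ _ _⟩⟩

lemma derived_nsmul {G : Type*} [AddCommGroup G] {σ : ℕ}
    (E : (Fin (σ + 1) → G) → (Fin (σ + 1) → G) → Prop) {u : Fin (σ + 1) → G} {e : G}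
    (h : ∀ c : G, Relation.ReflTransGen (derivedRel E) (u, c) (u, c + e)) :
    ∀ (n : ℕ) (c : G), Relation.ReflTransGen (derivedRel E) (u, c) (u, c + n • e) := by
  intro n
  induction n with
  | zero => simpa using fun c => Relation.ReflTransGen.refl
  | succ n ih =>
    intro c
    have := (ih c).trans (h (c + n • e))
    simpa [succ_nsmul, add_assoc] using this

/-- For abelian `G` and strongly connected base digraph `D`: if the translation automorphism
`f(v, b) = (v, a + b)` of the derived digraph maps some vertex into its own strong component
(there is a directed walk from `(v, b)` to `(v, a + b)`), then it maps every vertex into its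
own strong component. -/
theorem stmt_4 {G : Type*} [AddCommGroup G] [Fintype G] {σ : ℕ}
    (V : Set (Fin (σ + 1) → G)) (E : (Fin (σ + 1) → G) → (Fin (σ + 1) → G) → Prop)
    (hEV : ∀ u v, E u v → u ∈ V ∧ v ∈ V)
    (hstrong : ∀ u ∈ V, ∀ v ∈ V, Relation.ReflTransGen E u v)
    (a : G)
    (hsome : ∃ (v : Fin (σ + 1) → G) (b : G), v ∈ V ∧
      Relation.ReflTransGen (derivedRel E) (v, b) (v, a + b)) :
    ∀ u : Fin (σ + 1) → G, u ∈ V → ∀ c : G,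
      Relation.ReflTransGen (derivedRel E) (u, c) (u, a + c) := by
  obtain ⟨v, b, hvV, hloop⟩ := hsome
  -- at v, the shift by a works for every second coordinate
  have hva : ∀ c : G, Relation.ReflTransGen (derivedRel E) (v, c) (v, c + a) := by
    intro c
    have := derived_shift E (c - b) hloop
    simp only [] at this
    have h1 : b + (c - b) = c := by abel
    have h2 : a + b + (c - b) = c + a := by abel
    rwa [h1, h2] at this
  intro u huV c
  obtain ⟨s, hs⟩ := derived_lift E (hstrong u huV v hvV)
  obtain ⟨t, ht⟩ := derived_lift E (hstrong v hvV u huV)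
  set e := s + t with he
  -- e-loop at u
  have hue : ∀ c : G, Relation.ReflTransGen (derivedRel E) (u, c) (u, c + e) := by
    intro c
    have := (hs c).trans (ht (c + s))
    simpa [he, add_assoc] using this
  -- (a+e)-loop at u
  have huae : ∀ c : G, Relation.ReflTransGen (derivedRel E) (u, c) (u, c + (a + e)) := by
    intro c
    have := ((hs c).trans (hva (c + s))).trans (ht (c + s + a))
    have harr : c + s + a + t = c + (a + e) := by simp [he]; abel
    rwa [harr] at this
  -- -e is an nsmul of e
  have hne : 0 < addOrderOf e := addOrderOf_pos e
  obtain ⟨n, hn⟩ : ∃ n, addOrderOf e = n + 1 := ⟨addOrderOf e - 1, by omega⟩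
  have hninv : (n : ℕ) • e = -e := by
    have := addOrderOf_nsmul_eq_zero e
    rw [hn, succ_nsmul] at this
    linear_combination (norm := abel) this
  have := (huae c).trans (derived_nsmul E hue n (c + (a + e)))
  have harr : c + (a + e) + n • e = a + c := by rw [hninv]; abel
  rwa [harr] at this
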